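/- Let G be a finite simple graph on vertex set {1,…,n}, let K be the clique complex of G, let k ≥ 1 be such that K has at least one k-face, and let Δ_k be the k-th combinatorial Laplacian of K. Then for every k-face A, the number of k-faces B (including B = A) with (Δ_k)_{AB} ≠ 0 is at most n − k − d^up_A, where d^up_A is the up-degree of A. -/

import Mathlib

open Matrix

/-- An abstract simplicial complex on vertex set `Fin n`: a family of nonempty finite subsets
closed under taking nonempty subsets. -/
def IsSimplicialComplex {n : ℕ} (K : Finset (Finset (Fin n))) : Prop :=
  (∀ A ∈ K, A.Nonempty) ∧ ∀ A ∈ K, ∀ B ⊆ A, B.Nonempty → B ∈ K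

/-- The faces of `K` of cardinality `c`; the `k`-faces are those of cardinality `k + 1`. -/
def FaceC {n : ℕ} (K : Finset (Finset (Fin n))) (c : ℕ) : Type :=
  {A : Finset (Fin n) // A ∈ K ∧ A.card = c}

instance {n : ℕ} (K : Finset (Finset (Fin n))) (c : ℕ) : Fintype (FaceC K c) := by
  unfold FaceC; infer_instance

instance {n : ℕ} (K : Finset (Finset (Fin n))) (c : ℕ) : DecidableEq (FaceC K c) := by
  unfold FaceC; infer_instance

/-- The boundary operator `∂` as a matrix sending faces of cardinality `c + 1` to faces of
cardinality `c`: the face obtained by deleting the `ℓ`-th smallest vertex gets sign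
`(-1)^(ℓ-1)`. -/
noncomputable def bdry {n : ℕ} (K : Finset (Finset (Fin n))) (c : ℕ) :
    Matrix (FaceC K c) (FaceC K (c + 1)) ℝ :=
  fun B A =>
    if B.1 ⊆ A.1 then
      ∑ v ∈ A.1 \ B.1, (-1 : ℝ) ^ (A.1.filter (fun u => u < v)).card
    else 0

/-- The `k`-th combinatorial Laplacian `Δ_k = ∂_k^T ∂_k + ∂_{k+1} ∂_{k+1}^T`,
indexed by the `k`-faces (which have cardinality `k + 1`). -/
noncomputable def combLaplacian {n : ℕ} (K : Finset (Finset (Fin n))) (k : ℕ) :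
    Matrix (FaceC K (k + 1)) (FaceC K (k + 1)) ℝ :=
  (bdry K k)ᵀ * bdry K k + bdry K (k + 1) * (bdry K (k + 1))ᵀ

/-- The up-degree of a `k`-face `A`: the number of `(k+1)`-faces of `K` containing `A`. -/
def upDegree {n : ℕ} (K : Finset (Finset (Fin n))) (k : ℕ) (A : Finset (Fin n)) : ℕ :=
  (K.filter fun B => A ⊆ B ∧ B.card = k + 2).card

/-- Two distinct `k`-faces are down-up neighbors if their symmetric difference has
cardinality `2`. -/
def DownUpNbr {n : ℕ} (A B : Finset (Fin n)) : Prop :=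
  A ≠ B ∧ ((A \ B) ∪ (B \ A)).card = 2

/-- Down-up neighboring `k`-faces `A`, `B` are additionally up-down neighbors if `A ∪ B`
is a `(k+1)`-face of `K`. -/
def UpDownNbr {n : ℕ} (K : Finset (Finset (Fin n))) (k : ℕ) (A B : Finset (Fin n)) : Prop :=
  DownUpNbr A B ∧ (A ∪ B) ∈ K ∧ (A ∪ B).card = k + 2

/-- The clique complex of a finite simple graph `G` on `{1,…,n}`: the family of nonempty
cliques of `G`. -/
noncomputable def cliqueComplex {n : ℕ} (G : SimpleGraph (Fin n)) : Finset (Finset (Fin n)) :=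
  @Finset.filter _ (fun A => A.Nonempty ∧ G.IsClique (A : Set (Fin n)))
    (Classical.decPred _) Finset.univ


section AuxLemmas

open scoped Classical

variable {n : ℕ}

lemma mem_cliqueComplex {G : SimpleGraph (Fin n)} {A : Finset (Fin n)} :
    A ∈ cliqueComplex G ↔ A.Nonempty ∧ G.IsClique (A : Set (Fin n)) := by
  classical
  simp [cliqueComplex]

lemma cliqueComplex_down {G : SimpleGraph (Fin n)} {A B : Finset (Fin n)}
    (hA : A ∈ cliqueComplex G) (hBA : B ⊆ A) (hB : B.Nonempty) : B ∈ cliqueComplex G := by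
  rw [mem_cliqueComplex] at hA ⊢
  exact ⟨hB, hA.2.subset (Finset.coe_subset.2 hBA)⟩

lemma bdry_eq_zero {K : Finset (Finset (Fin n))} {c : ℕ} {B : FaceC K c} {A : FaceC K (c + 1)}
    (h : ¬ B.1 ⊆ A.1) : bdry K c B A = 0 := if_neg h

lemma bdry_apply_of_sdiff {K : Finset (Finset (Fin n))} {c : ℕ} {B : FaceC K c}
    {A : FaceC K (c + 1)} (hBA : B.1 ⊆ A.1) {v : Fin n} (hv : A.1 \ B.1 = {v}) :
    bdry K c B A = (-1 : ℝ) ^ (A.1.filter (fun u => u < v)).card := by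
  unfold bdry
  rw [if_pos hBA, hv, Finset.sum_singleton]

lemma term1_support {K : Finset (Finset (Fin n))} {k : ℕ} {A B : FaceC K (k + 1)}
    (h : ((bdry K k)ᵀ * bdry K k) A B ≠ 0) : k ≤ (A.1 ∩ B.1).card := by
  rw [Matrix.mul_apply] at h
  obtain ⟨C, -, hC⟩ := Finset.exists_ne_zero_of_sum_ne_zero h
  rw [Matrix.transpose_apply] at hC
  have h1 : C.1 ⊆ A.1 := by by_contra hs; exact hC (by rw [bdry_eq_zero hs, zero_mul])
  have h2 : C.1 ⊆ B.1 := by by_contra hs; exact hC (by rw [bdry_eq_zero hs, mul_zero])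
  calc k = C.1.card := C.2.2.symm
    _ ≤ _ := Finset.card_le_card (Finset.subset_inter h1 h2)

lemma term2_support {K : Finset (Finset (Fin n))} {k : ℕ} {A B : FaceC K (k + 1)}
    (h : (bdry K (k + 1) * (bdry K (k + 1))ᵀ) A B ≠ 0) : (A.1 ∪ B.1).card ≤ k + 2 := by
  rw [Matrix.mul_apply] at h
  obtain ⟨D, -, hD⟩ := Finset.exists_ne_zero_of_sum_ne_zero h
  rw [Matrix.transpose_apply] at hD
  have h1 : A.1 ⊆ D.1 := by by_contra hs; exact hD (by rw [bdry_eq_zero hs, zero_mul])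
  have h2 : B.1 ⊆ D.1 := by by_contra hs; exact hD (by rw [bdry_eq_zero hs, mul_zero])
  calc (A.1 ∪ B.1).card ≤ D.1.card := Finset.card_le_card (Finset.union_subset h1 h2)
    _ = k + 2 := D.2.2

lemma lap_offdiag_eq_zero {K : Finset (Finset (Fin n))} {k : ℕ} {A B : FaceC K (k + 1)}
    (hcap : (A.1 ∩ B.1).card = k) (hcapK : A.1 ∩ B.1 ∈ K)
    (hun : A.1 ∪ B.1 ∈ K) : combLaplacian K k A B = 0 := by
  have hAc : A.1.card = k + 1 := A.2.2
  have hBc : B.1.card = k + 1 := B.2.2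
  have hcup : (A.1 ∪ B.1).card = k + 2 := by
    have := Finset.card_union_add_card_inter A.1 B.1
    omega
  have haex : ∃ a, A.1 \ B.1 = {a} := by
    rw [← Finset.card_eq_one]
    have := Finset.card_inter_add_card_sdiff A.1 B.1
    omega
  have hbex : ∃ b, B.1 \ A.1 = {b} := by
    rw [← Finset.card_eq_one]
    have := Finset.card_inter_add_card_sdiff B.1 A.1
    rw [Finset.inter_comm] at this
    omega
  obtain ⟨a, ha⟩ := haex
  obtain ⟨b, hb⟩ := hbex
  have haA : a ∈ A.1 ∧ a ∉ B.1 := by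
    have : a ∈ A.1 \ B.1 := by rw [ha]; exact Finset.mem_singleton_self a
    exact Finset.mem_sdiff.1 this
  have hbB : b ∈ B.1 ∧ b ∉ A.1 := by
    have : b ∈ B.1 \ A.1 := by rw [hb]; exact Finset.mem_singleton_self b
    exact Finset.mem_sdiff.1 this
  have hab : a ≠ b := fun h => haA.2 (h ▸ hbB.1)
  set C₀ : FaceC K k := ⟨A.1 ∩ B.1, hcapK, hcap⟩ with hC₀
  set D₀ : FaceC K (k + 2) := ⟨A.1 ∪ B.1, hun, hcup⟩ with hD₀
  have ht1 : ((bdry K k)ᵀ * bdry K k) A B = bdry K k C₀ A * bdry K k C₀ B := by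
    rw [Matrix.mul_apply]
    rw [Finset.sum_eq_single C₀]
    · rw [Matrix.transpose_apply]
    · intro C _ hC
      rw [Matrix.transpose_apply]
      by_cases h1 : C.1 ⊆ A.1
      · by_cases h2 : C.1 ⊆ B.1
        · exfalso
          apply hC
          apply Subtype.ext
          apply Finset.eq_of_subset_of_card_le (Finset.subset_inter h1 h2)
          rw [hcap, C.2.2]
        · rw [bdry_eq_zero h2, mul_zero]
      · rw [bdry_eq_zero h1, zero_mul]
    · intro h; exact absurd (Finset.mem_univ C₀) h
  have ht2 : (bdry K (k + 1) * (bdry K (k + 1))ᵀ) A B = bdry K (k + 1) A D₀ * bdry K (k + 1) B D₀ := by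
    rw [Matrix.mul_apply]
    rw [Finset.sum_eq_single D₀]
    · rw [Matrix.transpose_apply]
    · intro D _ hD
      rw [Matrix.transpose_apply]
      by_cases h1 : A.1 ⊆ D.1
      · by_cases h2 : B.1 ⊆ D.1
        · exfalso
          apply hD
          apply Subtype.ext
          exact (Finset.eq_of_subset_of_card_le (Finset.union_subset h1 h2)
            (by rw [hcup, D.2.2])).symm
        · rw [bdry_eq_zero h2, mul_zero]
      · rw [bdry_eq_zero h1, zero_mul]
    · intro h; exact absurd (Finset.mem_univ D₀) h
  have hCA : A.1 \ C₀.1 = {a} := by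
    show A.1 \ (A.1 ∩ B.1) = {a}
    rw [Finset.sdiff_inter_self_left, ha]
  have hCB : B.1 \ C₀.1 = {b} := by
    show B.1 \ (A.1 ∩ B.1) = {b}
    rw [Finset.inter_comm, Finset.sdiff_inter_self_left, hb]
  have hDA : D₀.1 \ A.1 = {b} := by
    show (A.1 ∪ B.1) \ A.1 = {b}
    rw [Finset.union_sdiff_left, hb]
  have hDB : D₀.1 \ B.1 = {a} := by
    show (A.1 ∪ B.1) \ B.1 = {a}
    rw [Finset.union_sdiff_right, ha]
  have hDins : D₀.1 = insert b A.1 := by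
    show A.1 ∪ B.1 = insert b A.1
    rw [Finset.insert_eq, Finset.union_comm {b} A.1, ← hb, Finset.union_sdiff_self_eq_union]
  have hDins' : D₀.1 = insert a B.1 := by
    show A.1 ∪ B.1 = insert a B.1
    rw [Finset.insert_eq, Finset.union_comm {a} B.1, ← ha, Finset.union_sdiff_self_eq_union,
      Finset.union_comm]
  have hfa : (D₀.1.filter (fun u => u < a)).card
      = (A.1.filter (fun u => u < a)).card + (if b < a then 1 else 0) := by
    rw [hDins, Finset.filter_insert]
    by_cases hba : b < a
    · rw [if_pos hba, if_pos hba,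
        Finset.card_insert_of_notMem (fun h => hbB.2 (Finset.mem_of_mem_filter b h))]
    · rw [if_neg hba, if_neg hba]; omega
  have hfb : (D₀.1.filter (fun u => u < b)).card
      = (B.1.filter (fun u => u < b)).card + (if a < b then 1 else 0) := by
    rw [hDins', Finset.filter_insert]
    by_cases hba : a < b
    · rw [if_pos hba, if_pos hba,
        Finset.card_insert_of_notMem (fun h => haA.2 (Finset.mem_of_mem_filter a h))]
    · rw [if_neg hba, if_neg hba]; omega
  have e1 := bdry_apply_of_sdiff (K := K) (B := C₀) (A := A) Finset.inter_subset_left hCA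
  have e2 := bdry_apply_of_sdiff (K := K) (B := C₀) (A := B) Finset.inter_subset_right hCB
  have e3 := bdry_apply_of_sdiff (K := K) (B := A) (A := D₀) Finset.subset_union_left hDA
  have e4 := bdry_apply_of_sdiff (K := K) (B := B) (A := D₀) Finset.subset_union_right hDB
  show ((bdry K k)ᵀ * bdry K k + bdry K (k + 1) * (bdry K (k + 1))ᵀ) A B = 0
  rw [Matrix.add_apply, ht1, ht2, e1, e2, e3, e4, hfa, hfb]
  rcases lt_trichotomy a b with h | h | h
  · rw [if_pos h, if_neg (asymm h), pow_add, pow_add, pow_one, pow_zero]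
    ring
  · exact absurd h hab
  · rw [if_neg (asymm h), if_pos h, pow_add, pow_add, pow_one, pow_zero]
    ring

lemma face_determined {G : SimpleGraph (Fin n)} {A B : Finset (Fin n)}
    (hA : A ∈ cliqueComplex G) (hB : B ∈ cliqueComplex G)
    {a b : Fin n} (ha : A \ B = {a}) (hb : B \ A = {b})
    (hno : insert b A ∉ cliqueComplex G) :
    B = insert b (A.filter (fun x => G.Adj b x)) := by
  have hAcl := (mem_cliqueComplex.1 hA).2
  have hBcl := (mem_cliqueComplex.1 hB).2
  have hbB : b ∈ B ∧ b ∉ A := by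
    have : b ∈ B \ A := by rw [hb]; exact Finset.mem_singleton_self b
    exact Finset.mem_sdiff.1 this
  have hsub1 : A ∩ B ⊆ A.filter (fun x => G.Adj b x) := by
    intro x hx
    rw [Finset.mem_inter] at hx
    rw [Finset.mem_filter]
    refine ⟨hx.1, ?_⟩
    exact hBcl (Finset.mem_coe.2 hbB.1) (Finset.mem_coe.2 hx.2) (fun h => hbB.2 (h ▸ hx.1))
  have hnadj : ∃ v ∈ A, ¬ G.Adj b v := by
    rw [mem_cliqueComplex] at hno
    push_neg at hno
    have hnc := hno ⟨b, Finset.mem_insert_self b A⟩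
    rw [SimpleGraph.isClique_iff, Set.Pairwise] at hnc
    push_neg at hnc
    obtain ⟨u, hu, v, hv, huv, hna⟩ := hnc
    rw [Finset.coe_insert, Set.mem_insert_iff] at hu hv
    rcases hu with rfl | hu
    · rcases hv with rfl | hv
      · exact absurd rfl huv
      · exact ⟨v, Finset.mem_coe.1 hv, hna⟩
    · rcases hv with rfl | hv
      · exact ⟨u, Finset.mem_coe.1 hu, fun h => hna h.symm⟩
      · exact absurd (hAcl hu hv huv) hna
  have hsub2 : A.filter (fun x => G.Adj b x) ⊆ A ∩ B := by
    intro x hx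
    rw [Finset.mem_filter] at hx
    rw [Finset.mem_inter]
    refine ⟨hx.1, ?_⟩
    by_contra hxB
    have hxa : x = a := by
      have : x ∈ A \ B := Finset.mem_sdiff.2 ⟨hx.1, hxB⟩
      rw [ha] at this
      exact Finset.mem_singleton.1 this
    obtain ⟨v, hvA, hvna⟩ := hnadj
    have hvB : v ∉ B := by
      intro hvB
      exact hvna (hBcl (Finset.mem_coe.2 hbB.1) (Finset.mem_coe.2 hvB)
        (fun h => hbB.2 (h ▸ hvA)))
    have hva : v = a := by
      have : v ∈ A \ B := Finset.mem_sdiff.2 ⟨hvA, hvB⟩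
      rw [ha] at this
      exact Finset.mem_singleton.1 this
    exact hvna (hva ▸ hxa ▸ hx.2)
  have hcap : A ∩ B = A.filter (fun x => G.Adj b x) :=
    Finset.Subset.antisymm hsub1 hsub2
  have hBdecomp : B = (B \ A) ∪ (B ∩ A) := (Finset.sdiff_union_inter B A).symm
  rw [hBdecomp, hb, Finset.inter_comm, hcap, ← Finset.insert_eq]

end AuxLemmas

/-- For the clique complex `K` of a graph `G` on `{1,…,n}` and `k ≥ 1` such that `K` has a
`k`-face, every row of the `k`-th combinatorial Laplacian indexed by a `k`-face `A` has at most
`n - k - d^up_A` nonzero entries (diagonal included). -/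
theorem clique_laplacian_row_nonzero_count
    {n k : ℕ} (G : SimpleGraph (Fin n)) (hk : 1 ≤ k)
    (hne : Nonempty (FaceC (cliqueComplex G) (k + 1)))
    (A : FaceC (cliqueComplex G) (k + 1)) :
    {B : FaceC (cliqueComplex G) (k + 1) | combLaplacian (cliqueComplex G) k A B ≠ 0}.ncard ≤
      n - k - upDegree (cliqueComplex G) k A.1 := by
  classical
  obtain ⟨hAK, hAc⟩ := A.2
  set d := upDegree (cliqueComplex G) k A.1 with hd
  set S := Finset.univ.filter (fun B : FaceC (cliqueComplex G) (k + 1) => combLaplacian (cliqueComplex G) k A B ≠ 0) with hS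
  have hncard : {B : FaceC (cliqueComplex G) (k + 1) | combLaplacian (cliqueComplex G) k A B ≠ 0}.ncard = S.card := by
    rw [← Set.ncard_coe_finset]
    congr 1
    ext B
    simp [hS]
  have hn : k + 1 ≤ n := by
    have := Finset.card_le_univ A.1
    rwa [hAc, Fintype.card_fin] at this

  -- structure of nonzero off-diagonal entries
  have hkey : ∀ B ∈ S.erase A, ∃ b, B.1 \ A.1 = {b} ∧ b ∉ A.1 ∧ insert b A.1 ∉ (cliqueComplex G) ∧
      ∃ a, A.1 \ B.1 = {a} := by
    intro B hB
    rw [Finset.mem_erase, hS, Finset.mem_filter] at hB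
    obtain ⟨hBA, -, hΔ⟩ := hB
    obtain ⟨hBK, hBc⟩ := B.2
    have hne' : A.1 ≠ B.1 := fun h => hBA (Subtype.ext h.symm)
    have hcaple : (A.1 ∩ B.1).card ≤ k := by
      by_contra hle
      push_neg at hle
      have hcA : (A.1 ∩ B.1).card ≤ A.1.card := Finset.card_le_card Finset.inter_subset_left
      have h1 : A.1 ∩ B.1 = A.1 :=
        Finset.eq_of_subset_of_card_le Finset.inter_subset_left (by omega)
      have hsub : A.1 ⊆ B.1 := by rw [← h1]; exact Finset.inter_subset_right
      exact hne' (Finset.eq_of_subset_of_card_le hsub (by rw [hAc, hBc]))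
    have hcap : (A.1 ∩ B.1).card = k := by
      have hΔ' : ((bdry (cliqueComplex G) k)ᵀ * bdry (cliqueComplex G) k) A B ≠ 0 ∨
          (bdry (cliqueComplex G) (k + 1) * (bdry (cliqueComplex G) (k + 1))ᵀ) A B ≠ 0 := by
        by_contra h
        push_neg at h
        apply hΔ
        show ((bdry (cliqueComplex G) k)ᵀ * bdry (cliqueComplex G) k + bdry (cliqueComplex G) (k + 1) * (bdry (cliqueComplex G) (k + 1))ᵀ) A B = 0
        rw [Matrix.add_apply, h.1, h.2, add_zero]
      rcases hΔ' with h | h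
      · have := term1_support h; omega
      · have h2 := term2_support h
        have h3 := Finset.card_union_add_card_inter A.1 B.1
        rw [hAc, hBc] at h3
        omega
    have hcapK : A.1 ∩ B.1 ∈ (cliqueComplex G) := cliqueComplex_down hAK Finset.inter_subset_left
      (by rw [← Finset.card_pos, hcap]; omega)
    have hunK : A.1 ∪ B.1 ∉ (cliqueComplex G) := fun h => hΔ (lap_offdiag_eq_zero hcap hcapK h)
    have hbex : ∃ b, B.1 \ A.1 = {b} := by
      rw [← Finset.card_eq_one]
      have h4 := Finset.card_inter_add_card_sdiff B.1 A.1
      rw [Finset.inter_comm, hBc] at h4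
      omega
    have haex : ∃ a, A.1 \ B.1 = {a} := by
      rw [← Finset.card_eq_one]
      have h4 := Finset.card_inter_add_card_sdiff A.1 B.1
      rw [hAc] at h4
      omega
    obtain ⟨b, hb⟩ := hbex
    obtain ⟨a, ha⟩ := haex
    have hbA : b ∉ A.1 := by
      have : b ∈ B.1 \ A.1 := by rw [hb]; exact Finset.mem_singleton_self b
      exact (Finset.mem_sdiff.1 this).2
    have hins : insert b A.1 = A.1 ∪ B.1 := by
      rw [Finset.insert_eq, Finset.union_comm, ← hb, Finset.union_sdiff_self_eq_union]
    exact ⟨b, hb, hbA, by rw [hins]; exact hunK, a, ha⟩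
  -- the vertex extraction map
  set f : FaceC (cliqueComplex G) (k + 1) → Fin n := fun B =>
    if h : (B.1 \ A.1).Nonempty then (B.1 \ A.1).min' h else ⟨0, by omega⟩ with hf
  have hfval : ∀ (B : FaceC (cliqueComplex G) (k + 1)) (b : Fin n), B.1 \ A.1 = {b} → f B = b := by
    intro B b hb
    have hne' : (B.1 \ A.1).Nonempty := by rw [hb]; exact ⟨b, Finset.mem_singleton_self b⟩
    rw [hf]
    simp only [dif_pos hne']
    have hmem := Finset.min'_mem (B.1 \ A.1) hne'
    have hall : ∀ x ∈ B.1 \ A.1, x = b := by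
      intro x hx
      rw [hb] at hx
      exact Finset.mem_singleton.1 hx
    exact hall _ hmem
  set T := Finset.univ.filter (fun b : Fin n => b ∉ A.1 ∧ insert b A.1 ∉ (cliqueComplex G)) with hT
  set U := Finset.univ.filter (fun b : Fin n => b ∉ A.1 ∧ insert b A.1 ∈ (cliqueComplex G)) with hU
  have h2 : (S.erase A).card ≤ T.card := by
    apply Finset.card_le_card_of_injOn f
    · intro B hB
      obtain ⟨b, hb, hbA, hbK, -⟩ := hkey B hB
      rw [hfval B b hb, hT, Finset.mem_coe, Finset.mem_filter]
      exact ⟨Finset.mem_univ b, hbA, hbK⟩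
    · intro B hB B' hB' hfe
      obtain ⟨b, hb, hbA, hbK, a, ha⟩ := hkey B hB
      obtain ⟨b', hb', hbA', hbK', a', ha'⟩ := hkey B' hB'
      rw [hfval B b hb, hfval B' b' hb'] at hfe
      subst hfe
      have e1 := face_determined hAK B.2.1 ha hb hbK
      have e2 := face_determined hAK B'.2.1 ha' hb' hbK'
      exact Subtype.ext (e1.trans e2.symm)
  have h4 : U.card = d := by
    rw [hd]
    unfold upDegree
    apply Finset.card_bij (fun b _ => insert b A.1)
    · intro b hb
      rw [hU, Finset.mem_filter] at hb
      rw [Finset.mem_filter]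
      exact ⟨hb.2.2, Finset.subset_insert b A.1,
        by rw [Finset.card_insert_of_notMem hb.2.1, hAc]⟩
    · intro b1 hb1 b2 hb2 he
      rw [hU, Finset.mem_filter] at hb1 hb2
      have : b1 ∈ insert b2 A.1 := by rw [← he]; exact Finset.mem_insert_self b1 A.1
      rcases Finset.mem_insert.1 this with h | h
      · exact h
      · exact absurd h hb1.2.1
    · intro B hB
      rw [Finset.mem_filter] at hB
      obtain ⟨hBK, hAB, hBc⟩ := hB
      have hcd : (B \ A.1).card = 1 := by
        rw [Finset.card_sdiff_of_subset hAB, hBc, hAc]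
        omega
      obtain ⟨b, hb⟩ := Finset.card_eq_one.1 hcd
      have hbA : b ∉ A.1 := by
        have : b ∈ B \ A.1 := by rw [hb]; exact Finset.mem_singleton_self b
        exact (Finset.mem_sdiff.1 this).2
      have hBeq : B = insert b A.1 := by
        rw [Finset.insert_eq, Finset.union_comm, ← hb, Finset.union_sdiff_self_eq_union,
          Finset.union_eq_right.2 hAB]
      refine ⟨b, Finset.mem_filter.2 ⟨Finset.mem_univ b, hbA, ?_⟩, hBeq.symm⟩
      rw [← hBeq]; exact hBK
  have h3 : U.card + T.card = n - (k + 1) := by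
    have hV : (Finset.univ.filter (fun b : Fin n => b ∉ A.1)).card = n - (k + 1) := by
      rw [← Finset.sdiff_eq_filter, Finset.card_sdiff_of_subset (Finset.subset_univ A.1),
        Finset.card_fin, hAc]
    have hdisj : Disjoint U T := by
      rw [Finset.disjoint_left]
      intro b hbU hbT
      rw [hU, Finset.mem_filter] at hbU
      rw [hT, Finset.mem_filter] at hbT
      exact hbT.2.2 hbU.2.2
    have hUT : U ∪ T = Finset.univ.filter (fun b : Fin n => b ∉ A.1) := by
      ext b
      rw [Finset.mem_union, hU, hT, Finset.mem_filter, Finset.mem_filter, Finset.mem_filter]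
      constructor
      · rintro (h | h) <;> exact ⟨h.1, h.2.1⟩
      · rintro ⟨h1, h2⟩
        by_cases h3 : insert b A.1 ∈ (cliqueComplex G)
        · exact Or.inl ⟨h1, h2, h3⟩
        · exact Or.inr ⟨h1, h2, h3⟩
    rw [← Finset.card_union_of_disjoint hdisj, hUT, hV]
  have h1 : S.card ≤ (S.erase A).card + 1 := by
    by_cases hA : A ∈ S
    · rw [Finset.card_erase_of_mem hA]
      omega
    · rw [Finset.erase_eq_of_notMem hA]
      omega
  rw [hncard]
  omega
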